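/- Let f_br, f_cr : (0,1) → ℝ be continuously differentiable with f_cr nonnegative, let τ, ζ, ξ > 0, and let f(y,z) = −y + τ y(1−y)z, g(y,z) = −ζ z f_br(y) + ξ (1−z) f_cr(y) and φ(y,z) = 1/(yz). Then for every (y,z) ∈ (0,1)² the Dulac expression F(y,z) = ∂(φ f)/∂y (y,z) + ∂(φ g)/∂z (y,z) equals −τ − ξ f_cr(y)/(y z²), and in particular F(y,z) < 0 throughout (0,1)². -/

import Mathlib

/-- The Dulac expression F(y,z) = ∂(φf)/∂y + ∂(φg)/∂z with φ(y,z) = 1/(yz)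
    equals −τ − ξ f_cr(y)/(y z²) on (0,1)², and in particular is negative there. -/
theorem stmt_4 (fbr fcr : ℝ → ℝ)
    (hbrC : ContDiffOn ℝ 1 fbr (Set.Ioo 0 1)) (hcrC : ContDiffOn ℝ 1 fcr (Set.Ioo 0 1))
    (hcr : ∀ y ∈ Set.Ioo (0:ℝ) 1, 0 ≤ fcr y)
    (τ ζ ξ : ℝ) (hτ : 0 < τ) (hζ : 0 < ζ) (hξ : 0 < ξ) :
    ∀ y ∈ Set.Ioo (0:ℝ) 1, ∀ z ∈ Set.Ioo (0:ℝ) 1,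
      (deriv (fun y' => (1 / (y' * z)) * (-y' + τ * y' * (1 - y') * z)) y
        + deriv (fun z' => (1 / (y * z')) * (-(ζ * z' * fbr y) + ξ * (1 - z') * fcr y)) z
        = -τ - ξ * fcr y / (y * z ^ 2))
      ∧ (deriv (fun y' => (1 / (y' * z)) * (-y' + τ * y' * (1 - y') * z)) y
        + deriv (fun z' => (1 / (y * z')) * (-(ζ * z' * fbr y) + ξ * (1 - z') * fcr y)) z
        < 0) := by
  intro y hy z hz
  obtain ⟨hy0, hy1⟩ := hy
  obtain ⟨hz0, hz1⟩ := hz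
  have hyne : y ≠ 0 := ne_of_gt hy0
  have hzne : z ≠ 0 := ne_of_gt hz0
  -- first derivative
  have heq1 : (fun y' => (1 / (y' * z)) * (-y' + τ * y' * (1 - y') * z))
      =ᶠ[nhds y] (fun y' => -1/z + τ * (1 - y')) := by
    filter_upwards [eventually_ne_nhds hyne] with x hx
    field_simp
  have hd1 : HasDerivAt (fun y' : ℝ => -1/z + τ * (1 - y')) (-τ) y := by
    have h := ((hasDerivAt_id y).const_sub (1:ℝ)).const_mul τ
    have h2 := h.const_add (-1/z)
    simpa using h2
  have e1 : deriv (fun y' => (1 / (y' * z)) * (-y' + τ * y' * (1 - y') * z)) y = -τ := by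
    rw [heq1.deriv_eq, hd1.deriv]
  -- second derivative
  have heq2 : (fun z' => (1 / (y * z')) * (-(ζ * z' * fbr y) + ξ * (1 - z') * fcr y))
      =ᶠ[nhds z] (fun z' => (-(ζ * fbr y) - ξ * fcr y) / y + (ξ * fcr y / y) * z'⁻¹) := by
    filter_upwards [eventually_ne_nhds hzne] with x hx
    field_simp
    ring
  have hd2 : HasDerivAt (fun z' : ℝ => (-(ζ * fbr y) - ξ * fcr y) / y + (ξ * fcr y / y) * z'⁻¹)
      (-(ξ * fcr y / (y * z ^ 2))) z := by
    have h := (hasDerivAt_inv hzne).const_mul (ξ * fcr y / y)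
    have h2 := h.const_add ((-(ζ * fbr y) - ξ * fcr y) / y)
    refine h2.congr_deriv ?_
    ring
  have e2 : deriv (fun z' => (1 / (y * z')) * (-(ζ * z' * fbr y) + ξ * (1 - z') * fcr y)) z
      = -(ξ * fcr y / (y * z ^ 2)) := by
    rw [heq2.deriv_eq, hd2.deriv]
  rw [e1, e2]
  constructor
  · ring
  · have hpos : 0 ≤ ξ * fcr y / (y * z ^ 2) := by
      apply div_nonneg
      · exact mul_nonneg hξ.le (hcr y ⟨hy0, hy1⟩)
      · positivity
    linarith
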